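/- For the superalgebra S₇³ with products e₁e₁ = e₁, e₁f₁ = f₁e₁ = ½f₁, e₁f₂ = f₂e₁ = ½f₂, f₁f₂ = e₁ = −f₂f₁, the graded basis change E₁ᵗ = e₁, F₁ᵗ = f₁, F₂ᵗ = t·f₂ (t ≠ 0) yields structure constants converging as t → 0 to those of S₅³: E₁E₁ = E₁, E₁F₁ = ½F₁, E₁F₂ = ½F₂, F₁F₂ = 0. -/

import Mathlib

open Filter

/-- The multiplication of the (1,2)-superalgebra S₇³ on ℂ³ with coordinates (e₁; f₁, f₂):
e₁e₁ = e₁, e₁f₁ = f₁e₁ = ½f₁, e₁f₂ = f₂e₁ = ½f₂, f₁f₂ = e₁ = −f₂f₁. -/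
noncomputable def muS73 : ℂ × ℂ × ℂ → ℂ × ℂ × ℂ → ℂ × ℂ × ℂ :=
  fun x y => (x.1 * y.1 + (x.2.1 * y.2.2 - x.2.2 * y.2.1),
    (x.1 * y.2.1 + x.2.1 * y.1) / 2, (x.1 * y.2.2 + x.2.2 * y.1) / 2)

noncomputable def E1 : ℂ × ℂ × ℂ := (1, 0, 0)            -- E₁ = e₁
noncomputable def F1 : ℂ × ℂ × ℂ := (0, 1, 0)            -- F₁ = f₁
noncomputable def F2 (t : ℂ) : ℂ × ℂ × ℂ := (0, 0, t)    -- F₂ᵗ = t·f₂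

/-- The graded basis change E₁ = e₁, F₁ = f₁, F₂ᵗ = t·f₂ of S₇³ yields structure
constants converging as t → 0 to those of S₅³: E₁E₁ = E₁, E₁F₁ = ½F₁, E₁F₂ = ½F₂,
F₁F₂ = 0; the only t-dependent product is F₁F₂ᵗ = t·E₁ → 0. -/
theorem degeneration_S73_to_S53 :
    (∀ t : ℂ, t ≠ 0 →
      muS73 E1 E1 = E1 ∧
      muS73 E1 F1 = (1 / 2 : ℂ) • F1 ∧ muS73 F1 E1 = (1 / 2 : ℂ) • F1 ∧
      muS73 E1 (F2 t) = (1 / 2 : ℂ) • F2 t ∧ muS73 (F2 t) E1 = (1 / 2 : ℂ) • F2 t ∧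
      muS73 F1 (F2 t) = t • E1 ∧ muS73 (F2 t) F1 = -(t • E1) ∧
      muS73 F1 F1 = 0 ∧ muS73 (F2 t) (F2 t) = 0) ∧
    Tendsto (fun t : ℂ => muS73 F1 (F2 t)) (nhdsWithin 0 {(0 : ℂ)}ᶜ) (nhds 0) := by
  constructor
  · intro t ht
    simp only [muS73, E1, F1, F2, Prod.smul_mk, Prod.mk.injEq, smul_eq_mul,
      Prod.neg_mk, Prod.mk_eq_zero]
    norm_num
    ring
  · have h : (fun t : ℂ => muS73 F1 (F2 t)) = fun t : ℂ => (t, 0, 0) := by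
      funext t; simp [muS73, F1, F2]
    rw [h]
    apply Tendsto.mono_left _ nhdsWithin_le_nhds
    have : Tendsto (fun t : ℂ => ((t, 0, 0) : ℂ × ℂ × ℂ)) (nhds 0) (nhds ((0,0,0) : ℂ × ℂ × ℂ)) := by
      exact (continuous_id.prodMk continuous_const).tendsto 0
    simpa [Prod.mk_zero_zero] using this
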